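/- Let A ∈ ℝ^{n×n}, δ > 0, ε ≥ 0, and let X₀ = Z(c; g^(1),…,g^(p)) be a zonotope in ℝ^n with c ≠ 0 and g^(i) ≠ 0 for all i. Suppose that for each w ∈ {c, g^(1),…,g^(p)} there are matrices V_w ∈ ℝ^{n×ξ} with first column w/‖w‖ and H_w ∈ ℝ^{ξ×ξ} such that ‖exp(A t) w − ‖w‖ V_w exp(H_w t) e₁‖ ≤ ‖w‖ ε t for all t ∈ [0, δ]. Let η ≥ 2 be an integer with ‖H_w‖_∞ δ/(η+2) < 1 for every w, set Φ_w = (‖H_w‖_∞ δ)^{η+1}/((η+1)!) · 1/(1 − ‖H_w‖_∞ δ/(η+2)), and define F_w = { Σ_{i=2}^η τ_i H_w^i/i! + E : τ_i ∈ [(i^{−i/(i−1)} − i^{−1/(i−1)}) δ^i, 0], E ∈ ℝ^{ξ×ξ}, |E_{jk}| ≤ Φ_w for all j,k }. Let R̂ = Z(ĉ; ĝ^(1),…,ĝ^(p)) + { y : |y_j| ≤ (‖c‖ + Σ_i ‖g^(i)‖) ε δ for all j }, where ĉ = ‖c‖ V_c exp(H_c δ) e₁ and ĝ^(i) = ‖g^(i)‖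 V_{g^(i)} exp(H_{g^(i)} δ) e₁, and let N = { ‖c‖ V_c M_c e₁ + Σ_{i=1}^p λ_i ‖g^(i)‖ V_{g^(i)} M_i e₁ : M_c ∈ F_c, M_i ∈ F_{g^(i)}, λ_i ∈ [−1,1] }. Then ⋃_{t ∈ [0,δ]} { exp(A t) x : x ∈ X₀ } ⊆ convexHull(X₀ ∪ R̂) + N. -/

import Mathlib

open Matrix Set Pointwise

/-- Matrix exponential of a real square matrix. -/
noncomputable def mexp {m : ℕ} (A : Matrix (Fin m) (Fin m) ℝ) : Matrix (Fin m) (Fin m) ℝ :=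
  NormedSpace.exp A

/-- Euclidean norm of a vector in `ℝ^m`. -/
noncomputable def eucNorm {m : ℕ} (x : Fin m → ℝ) : ℝ :=
  ‖(WithLp.toLp 2 x : EuclideanSpace ℝ (Fin m))‖

/-- First standard basis vector of `ℝ^ξ`. -/
noncomputable def e1 {ξ : ℕ} [NeZero ξ] : Fin ξ → ℝ := Pi.single 0 1

/-- Maximum absolute row sum norm (`‖·‖_∞`) of a matrix. -/
noncomputable def rowSumNorm {m : ℕ} (H : Matrix (Fin m) (Fin m) ℝ) : ℝ :=
  ⨆ i, ∑ j, |H i j|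

/-- Lower endpoint `(i^{−i/(i−1)} − i^{−1/(i−1)}) δ^i` of the correction interval. -/
noncomputable def tauLo (i : ℕ) (δ : ℝ) : ℝ :=
  ((i : ℝ) ^ (-(i : ℝ) / ((i : ℝ) - 1)) - (i : ℝ) ^ (-(1 : ℝ) / ((i : ℝ) - 1))) * δ ^ i

/-- The zonotope with center `c` and generators `g i`. -/
def zonotope {n : ℕ} {ι : Type*} [Fintype ι] (c : Fin n → ℝ) (g : ι → Fin n → ℝ) :
    Set (Fin n → ℝ) :=
  {x | ∃ β : ι → ℝ, (∀ i, β i ∈ Set.Icc (-1 : ℝ) 1) ∧ x = c + ∑ i, β i • g i}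

/-- The Taylor remainder bound `Φ_w`. -/
noncomputable def phiBound {ξ : ℕ} (H : Matrix (Fin ξ) (Fin ξ) ℝ) (δ : ℝ) (η : ℕ) : ℝ :=
  (rowSumNorm H * δ) ^ (η + 1) / ((Nat.factorial (η + 1) : ℝ))
    * (1 / (1 - rowSumNorm H * δ / ((η : ℝ) + 2)))

/-- The set of correction matrices
`F = { Σ_{i=2}^η τᵢ Hⁱ/i! + E : τᵢ in the correction intervals, |E_{jk}| ≤ Φ }`. -/
def Fset {ξ : ℕ} (H : Matrix (Fin ξ) (Fin ξ) ℝ) (δ Φ : ℝ) (η : ℕ) :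
    Set (Matrix (Fin ξ) (Fin ξ) ℝ) :=
  {M | ∃ (τ : ℕ → ℝ) (E : Matrix (Fin ξ) (Fin ξ) ℝ),
      (∀ i ∈ Finset.Icc 2 η, τ i ∈ Set.Icc (tauLo i δ) 0) ∧
      (∀ j k, |E j k| ≤ Φ) ∧
      M = ∑ i ∈ Finset.Icc 2 η, (τ i / (Nat.factorial i : ℝ)) • H ^ i + E}

/-! ### Auxiliary lemmas -/

lemma mexp_smul_eq {m : ℕ} (t : ℝ) (H : Matrix (Fin m) (Fin m) ℝ) :
    mexp (t • H) = ∑' i : ℕ, (t ^ i / (Nat.factorial i : ℝ)) • H ^ i := by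
  rw [mexp, NormedSpace.exp_eq_tsum (𝕂 := ℝ)]
  refine tsum_congr fun i => ?_
  rw [smul_pow, smul_smul, div_eq_mul_inv, mul_comm]

lemma pow_tangent {s t : ℝ} (hs : 0 < s) (ht : 0 ≤ t) (k : ℕ) :
    s ^ (k+1) + ((k:ℝ)+1) * s ^ k * (t - s) ≤ t ^ (k+1) := by
  have hx : (-2:ℝ) ≤ t/s - 1 := by
    have : 0 ≤ t/s := div_nonneg ht hs.le
    linarith
  have h1 := one_add_mul_le_pow hx (k+1)
  have h2 := mul_le_mul_of_nonneg_right h1 (pow_nonneg hs.le (k+1))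
  have hs' : s ≠ 0 := hs.ne'
  have e1 : (1 + (t/s - 1))^(k+1) * s^(k+1) = t^(k+1) := by
    rw [show 1 + (t/s - 1) = t/s by ring, div_pow, div_mul_cancel₀ _ (pow_ne_zero _ hs')]
  have e2 : (1 + ((k:ℝ)+1) * (t/s - 1)) * s^(k+1) = s^(k+1) + ((k:ℝ)+1) * s^k * (t - s) := by
    field_simp
    ring
  rw [e1] at h2
  push_cast at h2
  linarith [h2, e2.symm.le, e2.le]

lemma tau_mem {i : ℕ} (hi : 2 ≤ i) {δ t : ℝ} (hδ : 0 < δ) (ht0 : 0 ≤ t) (htδ : t ≤ δ) :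
    t ^ i - t * δ ^ (i - 1) ∈ Set.Icc (tauLo i δ) 0 := by
  obtain ⟨m, rfl⟩ : ∃ m, i = m + 2 := ⟨i - 2, by omega⟩
  have hm1 : ((m:ℝ)+1) ≠ 0 := by positivity
  have hip : (0:ℝ) < (m:ℝ)+2 := by positivity
  set a := ((m:ℝ)+2) ^ (-(1:ℝ)/((m:ℝ)+1)) with ha
  have hae : ∀ k : ℕ, a ^ k = ((m:ℝ)+2) ^ (-(k:ℝ)/((m:ℝ)+1)) := by
    intro k
    rw [← Real.rpow_natCast a k, ha, ← Real.rpow_mul hip.le,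
      show (-(1:ℝ)/((m:ℝ)+1)) * (k:ℝ) = -(k:ℝ)/((m:ℝ)+1) by ring]
  have ha0 : 0 < a := Real.rpow_pos_of_pos hip _
  set s := δ * a with hsdef
  have hs : 0 < s := mul_pos hδ ha0
  have ham1 : a ^ (m+1) = ((m:ℝ)+2)⁻¹ := by
    rw [hae (m+1)]
    push_cast
    rw [show (-((m:ℝ)+1)/((m:ℝ)+1)) = (-1 : ℝ) by field_simp]
    exact Real.rpow_neg_one _
  have hδpow : ((m:ℝ)+2) * s ^ (m+1) = δ ^ (m+1) := by
    rw [hsdef, mul_pow, ham1]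
    field_simp
  have hlo : tauLo (m+2) δ = s ^ (m+2) - s * δ ^ (m+1) := by
    have ham2 : a ^ (m+2) = ((m:ℝ)+2) ^ (-((m:ℝ)+2)/((m:ℝ)+1)) := by
      rw [hae (m+2)]; push_cast; ring_nf
    unfold tauLo
    push_cast
    rw [show ((m:ℝ)+2) - 1 = (m:ℝ)+1 by ring]
    rw [hsdef, mul_pow, ham2, ← ha]
    ring
  constructor
  · rw [hlo, show m + 2 - 1 = m + 1 by omega, ← hδpow]
    have htan := pow_tangent hs ht0 (m+1)
    have key : s^(m+2) + ((m:ℝ)+1+1) * s^(m+1) * (t - s) - t*(((m:ℝ)+2)*s^(m+1))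
        = s^(m+2) - s*(((m:ℝ)+2)*s^(m+1)) := by ring
    push_cast at htan
    nlinarith [htan, key]
  · rw [show m + 2 - 1 = m + 1 by omega]
    have h5 : t ^ (m+2) ≤ t * δ ^ (m+1) := by
      calc t ^ (m+2) = t * t ^ (m+1) := by ring
      _ ≤ t * δ ^ (m+1) :=
          mul_le_mul_of_nonneg_left (pow_le_pow_left₀ ht0 htδ _) ht0
    linarith

lemma abs_le_enorm {m : ℕ} (x : Fin m → ℝ) (j : Fin m) : |x j| ≤ eucNorm x := by
  rw [eucNorm, EuclideanSpace.norm_eq]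
  rw [← Real.sqrt_sq_eq_abs]
  apply Real.sqrt_le_sqrt
  calc x j ^ 2 = |x j| ^ 2 := (sq_abs _).symm
  _ ≤ ∑ i, ‖x i‖ ^ 2 := by
      refine Finset.single_le_sum (f := fun i => ‖x i‖^2) (fun i _ => by positivity)
        (Finset.mem_univ j) |>.trans_eq' ?_
      rw [Real.norm_eq_abs]
  _ = ∑ i, ‖(WithLp.toLp 2 x : EuclideanSpace ℝ (Fin m)) i‖ ^ 2 := rfl

lemma enorm_nonneg' {m : ℕ} (x : Fin m → ℝ) : 0 ≤ eucNorm x := norm_nonneg _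

lemma eq_zero_of_enorm_le_zero {m : ℕ} {x : Fin m → ℝ} (h : eucNorm x ≤ 0) : x = 0 := by
  have := norm_le_zero_iff.mp h
  exact congrArg WithLp.ofLp this

section NormedLemmas

attribute [local instance] Matrix.linftyOpNormedAddCommGroup Matrix.linftyOpNormedRing
  Matrix.linftyOpNormedAlgebra

variable {ξ : ℕ} [NeZero ξ]

lemma rowSumNorm_eq' (H : Matrix (Fin ξ) (Fin ξ) ℝ) : rowSumNorm H = ‖H‖ := by
  have hcast : ∀ i, ∑ j, |H i j| = (((∑ j, ‖H i j‖₊ : NNReal)) : ℝ) := by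
    intro i; push_cast; simp [Real.norm_eq_abs]
  rw [rowSumNorm, Matrix.linfty_opNorm_def]
  apply le_antisymm
  · refine ciSup_le fun i => ?_
    rw [hcast i]
    exact NNReal.coe_le_coe.mpr (Finset.le_sup (f := fun i => ∑ j, ‖H i j‖₊) (Finset.mem_univ i))
  · obtain ⟨i, -, hi⟩ := Finset.exists_mem_eq_sup (Finset.univ : Finset (Fin ξ))
      (Finset.univ_nonempty) (fun i => ∑ j, ‖H i j‖₊)
    rw [hi, ← hcast i]
    exact le_ciSup (f := fun i => ∑ j, |H i j|) (Set.Finite.bddAbove (Set.finite_range _)) i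

lemma entry_abs_le_norm' (M : Matrix (Fin ξ) (Fin ξ) ℝ) (j k : Fin ξ) : |M j k| ≤ ‖M‖ := by
  calc |M j k| ≤ ∑ l, |M j l| := Finset.single_le_sum (f := fun l => |M j l|)
        (fun l _ => abs_nonneg _) (Finset.mem_univ k)
  _ ≤ ‖M‖ := by
      rw [← rowSumNorm_eq', rowSumNorm]
      exact le_ciSup (f := fun i => ∑ l, |M i l|) (Set.Finite.bddAbove (Set.finite_range _)) j

omit [NeZero ξ] in
lemma summable_expSeries (x : ℝ) (H : Matrix (Fin ξ) (Fin ξ) ℝ) :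
    Summable (fun i : ℕ => (x ^ i / (Nat.factorial i : ℝ)) • H ^ i) := by
  refine (NormedSpace.expSeries_summable' (𝕂 := ℝ) (x • H)).congr fun i => ?_
  rw [smul_pow, smul_smul, div_eq_mul_inv, mul_comm]

set_option maxHeartbeats 1000000 in
lemma exp_decomp (H : Matrix (Fin ξ) (Fin ξ) ℝ) {δ t : ℝ} (hδ : 0 < δ)
    (ht0 : 0 ≤ t) (htδ : t ≤ δ) {η : ℕ} (hη : 2 ≤ η)
    (hsmall : rowSumNorm H * δ / ((η:ℝ)+2) < 1) :
    ∃ M ∈ Fset H δ (phiBound H δ η) η,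
      mexp (t • H) = (1 - t/δ) • (1 : Matrix (Fin ξ) (Fin ξ) ℝ) + (t/δ) • mexp (δ • H) + M := by
  have hδ' : δ ≠ 0 := hδ.ne'
  set r := ‖H‖ with hrdef
  have hr0 : 0 ≤ r := norm_nonneg H
  set τ : ℕ → ℝ := fun i => t^i - t*δ^(i-1) with hτdef
  set g : ℕ → Matrix (Fin ξ) (Fin ξ) ℝ := fun i =>
    if 2 ≤ i then (τ i/(Nat.factorial i:ℝ)) • H^i else 0 with hgdef
  have hcoef : ∀ i : ℕ, 2 ≤ i → |τ i| ≤ δ^i := by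
    intro i hi
    obtain ⟨m, rfl⟩ : ∃ m, i = m + 2 := ⟨i - 2, by omega⟩
    rw [hτdef]
    simp only []
    rw [show m + 2 - 1 = m + 1 by omega, abs_sub_le_iff]
    have h1 : t ^ (m+2) ≤ δ ^ (m+2) := pow_le_pow_left₀ ht0 htδ _
    have h2 : t * δ^(m+1) ≤ δ^(m+2) := by
      calc t * δ^(m+1) ≤ δ * δ^(m+1) := by nlinarith [pow_pos hδ (m+1)]
      _ = δ^(m+2) := by ring
    have h3 : 0 ≤ t ^ (m+2) := pow_nonneg ht0 _
    have h4 : 0 ≤ t * δ^(m+1) := by positivity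
    constructor <;> linarith
  have hgb : ∀ i, ‖g i‖ ≤ (r*δ)^i / (Nat.factorial i : ℝ) := by
    intro i
    by_cases hi : 2 ≤ i
    · have hgi : g i = (τ i/(Nat.factorial i:ℝ)) • H^i := by simp [hgdef, hi]
      rw [hgi, norm_smul, Real.norm_eq_abs]
      have h1 : ‖H ^ i‖ ≤ r ^ i := norm_pow_le' H (by omega)
      have h2 : |τ i/(Nat.factorial i:ℝ)| ≤ δ^i / (Nat.factorial i:ℝ) := by
        rw [abs_div, abs_of_pos (by positivity : (0:ℝ) < (Nat.factorial i:ℝ))]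
        exact div_le_div_of_nonneg_right (hcoef i hi) (by positivity)
      calc |τ i/(Nat.factorial i:ℝ)| * ‖H^i‖
          ≤ (δ^i / (Nat.factorial i:ℝ)) * r^i :=
            mul_le_mul h2 h1 (norm_nonneg _) (by positivity)
      _ = (r*δ)^i / (Nat.factorial i:ℝ) := by rw [mul_pow]; ring
    · have hgi : g i = 0 := by simp [hgdef, hi]
      rw [hgi, norm_zero]
      positivity
  have hgsum : Summable g :=
    Summable.of_norm_bounded (Real.summable_pow_div_factorial (r*δ)) hgb
  set b : ℕ → Matrix (Fin ξ) (Fin ξ) ℝ := fun i => (δ^i/(Nat.factorial i:ℝ)) • H^i with hbdef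
  set s : ℕ → Matrix (Fin ξ) (Fin ξ) ℝ :=
    fun i => if i = 0 then (1 - t/δ) • (1 : Matrix (Fin ξ) (Fin ξ) ℝ) else 0 with hsdef
  have hab : ∀ i : ℕ, (t^i/(Nat.factorial i:ℝ)) • H^i = g i + (s i + (t/δ) • b i) := by
    intro i
    match i with
    | 0 => simp [hbdef, hgdef, hsdef, ← add_smul]
    | 1 =>
      have hg1 : g 1 = 0 := by simp [hgdef]
      have hs1 : s 1 = 0 := by simp [hsdef]
      have hb1 : b 1 = δ • H := by simp [hbdef]
      rw [hg1, hs1, hb1, zero_add, zero_add, smul_smul]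
      simp only [pow_one, Nat.factorial_one, Nat.cast_one, div_one]
      congr 1
      field_simp
    | (m+2) =>
      have hgm : g (m+2) = (τ (m+2)/(Nat.factorial (m+2):ℝ)) • H^(m+2) := by
        simp [hgdef]
      have hsm : s (m+2) = 0 := by simp [hsdef]
      rw [hgm, hsm, zero_add, hbdef]
      simp only [smul_smul, ← add_smul]
      congr 1
      rw [hτdef]
      simp only []
      rw [show m + 2 - 1 = m + 1 by omega]
      field_simp
      ring
  have hbsum : Summable b := summable_expSeries δ H
  have hssum : Summable s := by
    apply summable_of_ne_finset_zero (s := {0})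
    intro i hi
    rw [hsdef]
    simp only []
    rw [if_neg (by simpa using hi)]
  have htsum : mexp (t • H) = (∑' i, g i) + ((1 - t/δ) • (1 : Matrix (Fin ξ) (Fin ξ) ℝ)
      + (t/δ) • mexp (δ • H)) := by
    rw [mexp_smul_eq t H, mexp_smul_eq δ H]
    rw [show (fun i : ℕ => (t^i/(Nat.factorial i:ℝ)) • H^i) = fun i => g i + (s i + (t/δ) • b i)
      from funext hab]
    rw [hgsum.tsum_add (hssum.add (hbsum.const_smul (t/δ)))]
    congr 1
    rw [hssum.tsum_add (hbsum.const_smul (t/δ))]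
    congr 1
    · rw [hsdef]
      exact tsum_ite_eq 0 _
    · exact hbsum.tsum_const_smul _
  set E := ∑' i, g (i + (η+1)) with hEdef
  have hsum_eq : (∑' i, g i)
      = ∑ i ∈ Finset.Icc 2 η, (τ i/(Nat.factorial i:ℝ)) • H^i + E := by
    rw [← hgsum.sum_add_tsum_nat_add (η+1), ← hEdef]
    congr 1
    calc ∑ i ∈ Finset.range (η+1), g i
        = ∑ i ∈ (Finset.range (η+1)).filter (fun i => 2 ≤ i),
            (τ i/(Nat.factorial i:ℝ)) • H^i := by
          rw [Finset.sum_filter]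
      _ = ∑ i ∈ Finset.Icc 2 η, (τ i/(Nat.factorial i:ℝ)) • H^i := by
          apply Finset.sum_congr _ (fun _ _ => rfl)
          ext k
          simp only [Finset.mem_filter, Finset.mem_range, Finset.mem_Icc]
          omega
  have hq0 : 0 ≤ r * δ / ((η:ℝ)+2) := by positivity
  have hq1 : r * δ / ((η:ℝ)+2) < 1 := by rwa [rowSumNorm_eq'] at hsmall
  have hBsum : Summable (fun i : ℕ => (r*δ)^(i+(η+1)) / (Nat.factorial (i+(η+1)) : ℝ)) :=
    (summable_nat_add_iff (η+1)).2 (Real.summable_pow_div_factorial (r*δ))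
  have hgnormsum : Summable (fun i => ‖g (i + (η+1))‖) :=
    Summable.of_nonneg_of_le (fun _ => norm_nonneg _) (fun i => hgb _) hBsum
  have keyineq : ∀ i : ℕ, (r*δ)^(i+(η+1)) / (Nat.factorial (i+(η+1)) : ℝ)
      ≤ ((r*δ)^(η+1)/(Nat.factorial (η+1):ℝ)) * (r*δ/((η:ℝ)+2))^i := by
    intro i
    have hfac : ((Nat.factorial (η+1) : ℝ) * ((η:ℝ)+2)^i) ≤ (Nat.factorial (i+(η+1)) : ℝ) := by
      have h6 := Nat.factorial_mul_pow_le_factorial (m := η+1) (n := i)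
      rw [show (η+1)+i = i+(η+1) by omega] at h6
      calc ((Nat.factorial (η+1) : ℝ) * ((η:ℝ)+2)^i)
          = ((Nat.factorial (η+1) * (η+2)^i : ℕ) : ℝ) := by push_cast; ring
      _ ≤ _ := Nat.cast_le.2 h6
    calc (r*δ)^(i+(η+1)) / (Nat.factorial (i+(η+1)) : ℝ)
        ≤ (r*δ)^(i+(η+1)) / ((Nat.factorial (η+1) : ℝ) * ((η:ℝ)+2)^i) :=
          div_le_div_of_nonneg_left (by positivity) (by positivity) hfac
      _ = ((r*δ)^(η+1)/(Nat.factorial (η+1):ℝ)) * (r*δ/((η:ℝ)+2))^i := by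
          rw [pow_add, div_pow, mul_pow]
          field_simp
  have hEnorm : ‖E‖ ≤ phiBound H δ η := by
    have hgeo : Summable (fun i : ℕ =>
        ((r*δ)^(η+1)/(Nat.factorial (η+1):ℝ)) * (r*δ/((η:ℝ)+2))^i) :=
      (summable_geometric_of_lt_one hq0 hq1).mul_left _
    calc ‖E‖ ≤ ∑' i, ‖g (i + (η+1))‖ := norm_tsum_le_tsum_norm hgnormsum
    _ ≤ ∑' i : ℕ, ((r*δ)^(η+1)/(Nat.factorial (η+1):ℝ)) * (r*δ/((η:ℝ)+2))^i := by
        apply Summable.tsum_le_tsum _ hgnormsum hgeo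
        intro i
        exact (hgb _).trans (keyineq i)
    _ = ((r*δ)^(η+1)/(Nat.factorial (η+1):ℝ)) * (1 - r*δ/((η:ℝ)+2))⁻¹ := by
        rw [tsum_mul_left, tsum_geometric_of_lt_one hq0 hq1]
    _ = phiBound H δ η := by
        rw [phiBound, rowSumNorm_eq', one_div]
  refine ⟨∑ i ∈ Finset.Icc 2 η, (τ i/(Nat.factorial i:ℝ)) • H^i + E,
    ⟨τ, E, ?_, ?_, rfl⟩, ?_⟩
  · intro i hi
    simp only [Finset.mem_Icc] at hi
    exact tau_mem hi.1 hδ ht0 htδ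
  · intro j k
    exact (entry_abs_le_norm' E j k).trans hEnorm
  · rw [htsum, hsum_eq]
    abel

end NormedLemmas

lemma vec_decomp {n ξ : ℕ} [NeZero ξ] (w : Fin n → ℝ) (hw : w ≠ 0)
    (V : Matrix (Fin n) (Fin ξ) ℝ) (H : Matrix (Fin ξ) (Fin ξ) ℝ)
    (hV : V *ᵥ e1 = (eucNorm w)⁻¹ • w) {δ t : ℝ} (hδ : 0 < δ) (ht0 : 0 ≤ t) (htδ : t ≤ δ)
    {η : ℕ} (hη : 2 ≤ η) (hsmall : rowSumNorm H * δ / ((η:ℝ)+2) < 1) :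
    ∃ M ∈ Fset H δ (phiBound H δ η) η,
      eucNorm w • (V *ᵥ (mexp (t • H) *ᵥ e1)) =
        (1 - t/δ) • w + (t/δ) • (eucNorm w • (V *ᵥ (mexp (δ • H) *ᵥ e1)))
        + eucNorm w • (V *ᵥ (M *ᵥ e1)) := by
  obtain ⟨M, hM, hdec⟩ := exp_decomp H hδ ht0 htδ hη hsmall
  refine ⟨M, hM, ?_⟩
  have hw0 : eucNorm w ≠ 0 := fun h => hw (eq_zero_of_enorm_le_zero h.le)
  have hVe : eucNorm w • (V *ᵥ e1) = w := by rw [hV, smul_inv_smul₀ hw0]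
  calc eucNorm w • (V *ᵥ (mexp (t • H) *ᵥ e1))
      = eucNorm w • (V *ᵥ
        ((((1 - t/δ) • (1 : Matrix (Fin ξ) (Fin ξ) ℝ) + (t/δ) • mexp (δ • H)) + M) *ᵥ e1)) := by
        rw [← hdec]
    _ = (1 - t/δ) • (eucNorm w • (V *ᵥ e1))
        + (t/δ) • (eucNorm w • (V *ᵥ (mexp (δ • H) *ᵥ e1)))
        + eucNorm w • (V *ᵥ (M *ᵥ e1)) := by
        rw [Matrix.add_mulVec, Matrix.add_mulVec, Matrix.smul_mulVec,
          Matrix.smul_mulVec, Matrix.one_mulVec]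
        rw [Matrix.mulVec_add, Matrix.mulVec_add, Matrix.mulVec_smul, Matrix.mulVec_smul,
          smul_add, smul_add]
        rw [smul_comm (eucNorm w) (1 - t/δ), smul_comm (eucNorm w) (t/δ)]
    _ = (1 - t/δ) • w + (t/δ) • (eucNorm w • (V *ᵥ (mexp (δ • H) *ᵥ e1)))
        + eucNorm w • (V *ᵥ (M *ᵥ e1)) := by rw [hVe]

set_option maxHeartbeats 1000000 in
/-- Homogeneous solution for a time interval: the union over
`t ∈ [0, δ]` of the images of the zonotope `X₀` under `exp(A t)` is contained in
`conv(X₀ ∪ R̂) + N`. -/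
theorem stmt10 {n ξ p : ℕ} [NeZero ξ]
    (A : Matrix (Fin n) (Fin n) ℝ) (δ ε : ℝ) (hδ : 0 < δ) (hε : 0 ≤ ε)
    (c : Fin n → ℝ) (g : Fin p → Fin n → ℝ)
    (hc0 : c ≠ 0) (hg0 : ∀ i, g i ≠ 0)
    (Vc : Matrix (Fin n) (Fin ξ) ℝ) (Hc : Matrix (Fin ξ) (Fin ξ) ℝ)
    (Vg : Fin p → Matrix (Fin n) (Fin ξ) ℝ) (Hg : Fin p → Matrix (Fin ξ) (Fin ξ) ℝ)
    (hVc1 : Vc *ᵥ e1 = (eucNorm c)⁻¹ • c)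
    (hVg1 : ∀ i, Vg i *ᵥ e1 = (eucNorm (g i))⁻¹ • g i)
    (hcb : ∀ t ∈ Set.Icc (0 : ℝ) δ,
      eucNorm (mexp (t • A) *ᵥ c - eucNorm c • (Vc *ᵥ (mexp (t • Hc) *ᵥ e1)))
        ≤ eucNorm c * ε * t)
    (hgb : ∀ i, ∀ t ∈ Set.Icc (0 : ℝ) δ,
      eucNorm (mexp (t • A) *ᵥ g i - eucNorm (g i) • (Vg i *ᵥ (mexp (t • Hg i) *ᵥ e1)))
        ≤ eucNorm (g i) * ε * t)
    (η : ℕ) (hη : 2 ≤ η)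
    (hsmallc : rowSumNorm Hc * δ / ((η : ℝ) + 2) < 1)
    (hsmallg : ∀ i, rowSumNorm (Hg i) * δ / ((η : ℝ) + 2) < 1) :
    (⋃ t ∈ Set.Icc (0 : ℝ) δ, (fun x => mexp (t • A) *ᵥ x) '' zonotope c g) ⊆
      convexHull ℝ (zonotope c g ∪
          (zonotope (eucNorm c • (Vc *ᵥ (mexp (δ • Hc) *ᵥ e1)))
              (fun i => eucNorm (g i) • (Vg i *ᵥ (mexp (δ • Hg i) *ᵥ e1)))
            + {y : Fin n → ℝ | ∀ j, |y j| ≤ (eucNorm c + ∑ i, eucNorm (g i)) * ε * δ}))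
        + {x : Fin n → ℝ |
            ∃ (Mc : Matrix (Fin ξ) (Fin ξ) ℝ) (Mg : Fin p → Matrix (Fin ξ) (Fin ξ) ℝ)
              (lam : Fin p → ℝ),
              Mc ∈ Fset Hc δ (phiBound Hc δ η) η ∧
              (∀ i, Mg i ∈ Fset (Hg i) δ (phiBound (Hg i) δ η) η) ∧
              (∀ i, lam i ∈ Set.Icc (-1 : ℝ) 1) ∧
              x = eucNorm c • (Vc *ᵥ (Mc *ᵥ e1))
                + ∑ i, lam i • (eucNorm (g i) • (Vg i *ᵥ (Mg i *ᵥ e1)))} := by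
  rintro y hy
  simp only [Set.mem_iUnion, Set.mem_image] at hy
  obtain ⟨t, ht, x, hx, rfl⟩ := hy
  obtain ⟨ht0, htδ⟩ := ht
  obtain ⟨β, hβ, rfl⟩ := hx
  have hβ1 : ∀ i, |β i| ≤ 1 := fun i => abs_le.mpr ⟨(hβ i).1, (hβ i).2⟩
  have hK0 : 0 ≤ eucNorm c + ∑ i, eucNorm (g i) :=
    add_nonneg (enorm_nonneg' c) (Finset.sum_nonneg fun i _ => enorm_nonneg' _)
  -- decompositions per generator
  obtain ⟨Mc, hMc, hcdec⟩ := vec_decomp c hc0 Vc Hc hVc1 hδ ht0 htδ hη hsmallc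
  choose Mg hMg hgdec using fun i =>
    vec_decomp (g i) (hg0 i) (Vg i) (Hg i) (hVg1 i) hδ ht0 htδ hη (hsmallg i)
  -- abbreviations
  set chat : Fin n → ℝ := eucNorm c • (Vc *ᵥ (mexp (δ • Hc) *ᵥ e1)) with hchat
  set ghat : Fin p → Fin n → ℝ :=
    fun i => eucNorm (g i) • (Vg i *ᵥ (mexp (δ • Hg i) *ᵥ e1)) with hghat
  set nc : Fin n → ℝ := eucNorm c • (Vc *ᵥ (Mc *ᵥ e1)) with hnc
  set ng : Fin p → Fin n → ℝ := fun i => eucNorm (g i) • (Vg i *ᵥ (Mg i *ᵥ e1)) with hng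
  set ec : Fin n → ℝ :=
    mexp (t • A) *ᵥ c - eucNorm c • (Vc *ᵥ (mexp (t • Hc) *ᵥ e1)) with hecdef
  set eg : Fin p → Fin n → ℝ :=
    fun i => mexp (t • A) *ᵥ g i - eucNorm (g i) • (Vg i *ᵥ (mexp (t • Hg i) *ᵥ e1)) with hegdef
  set bb : Fin n → ℝ := ec + ∑ i, β i • eg i with hbb
  -- error bounds
  have hec_bound : eucNorm ec ≤ eucNorm c * ε * t := hcb t ⟨ht0, htδ⟩
  have heg_bound : ∀ i, eucNorm (eg i) ≤ eucNorm (g i) * ε * t := fun i => hgb i t ⟨ht0, htδ⟩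
  -- the key algebraic identity
  have h2 : mexp (t • A) *ᵥ c = ((1 - t/δ) • c + (t/δ) • chat + nc) + ec := by
    rw [hecdef]
    rw [hcdec]
    abel
  have h3 : ∀ i, β i • (mexp (t • A) *ᵥ g i)
      = (1 - t/δ) • (β i • g i) + (t/δ) • (β i • ghat i) + β i • ng i + β i • eg i := by
    intro i
    have hgi : mexp (t • A) *ᵥ g i = ((1 - t/δ) • g i + (t/δ) • ghat i + ng i) + eg i := by
      rw [hegdef]
      simp only []
      rw [hgdec i]
      abel
    rw [hgi]
    rw [smul_add, smul_add, smul_add, smul_comm (β i) (1 - t/δ), smul_comm (β i) (t/δ)]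
  have h1 : mexp (t • A) *ᵥ (c + ∑ i, β i • g i)
      = (mexp (t • A) *ᵥ c) + ∑ i, β i • (mexp (t • A) *ᵥ g i) := by
    rw [Matrix.mulVec_add]
    congr 1
    rw [← Matrix.mulVecLin_apply, map_sum]
    refine Finset.sum_congr rfl fun i _ => ?_
    rw [LinearMap.map_smul, Matrix.mulVecLin_apply]
  have key : mexp (t • A) *ᵥ (c + ∑ i, β i • g i)
      = ((1 - t/δ) • (c + ∑ i, β i • g i) + (t/δ) • (chat + ∑ i, β i • ghat i) + bb)
        + (nc + ∑ i, β i • ng i) := by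
    rw [h1, h2, Finset.sum_congr rfl (fun i _ => h3 i)]
    rw [Finset.sum_add_distrib, Finset.sum_add_distrib, Finset.sum_add_distrib,
      ← Finset.smul_sum, ← Finset.smul_sum]
    rw [hbb]
    simp only [smul_add]
    abel
  -- normalized error vector
  have hbbx : ∃ bb' : Fin n → ℝ, bb = (t/δ) • bb' ∧
      ∀ j, |bb' j| ≤ (eucNorm c + ∑ i, eucNorm (g i)) * ε * δ := by
    by_cases ht00 : t = 0
    · refine ⟨0, ?_, ?_⟩
      · have hec0 : ec = 0 := eq_zero_of_enorm_le_zero (by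
          have h7 := hec_bound
          rw [ht00] at h7
          simpa using h7)
        have heg0 : ∀ i, eg i = 0 := fun i => eq_zero_of_enorm_le_zero (by
          have h7 := heg_bound i
          rw [ht00] at h7
          simpa using h7)
        rw [hbb, hec0, smul_zero]
        simp [heg0]
      · intro j
        simp only [Pi.zero_apply, abs_zero]
        positivity
    · have htpos : 0 < t := lt_of_le_of_ne ht0 (Ne.symm ht00)
      refine ⟨(δ/t) • bb, ?_, ?_⟩
      · rw [smul_smul, show t/δ * (δ/t) = 1 by field_simp, one_smul]
      · have hbb_bound : ∀ j, |bb j| ≤ (eucNorm c + ∑ i, eucNorm (g i)) * ε * t := by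
          intro j
          have hj : bb j = ec j + ∑ i, β i * eg i j := by
            rw [hbb]
            simp [Finset.sum_apply]
          rw [hj]
          calc |ec j + ∑ i, β i * eg i j| ≤ |ec j| + |∑ i, β i * eg i j| := abs_add_le _ _
          _ ≤ |ec j| + ∑ i, |β i * eg i j| :=
              add_le_add_right (Finset.abs_sum_le_sum_abs _ _) _
          _ ≤ eucNorm c * ε * t + ∑ i, eucNorm (g i) * ε * t := by
              apply add_le_add
              · exact (abs_le_enorm ec j).trans hec_bound
              · refine Finset.sum_le_sum fun i _ => ?_
                rw [abs_mul]
                calc |β i| * |eg i j| ≤ 1 * (eucNorm (g i) * ε * t) := by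
                      apply mul_le_mul (hβ1 i) ((abs_le_enorm (eg i) j).trans (heg_bound i))
                        (abs_nonneg _) zero_le_one
                _ = eucNorm (g i) * ε * t := one_mul _
          _ = (eucNorm c + ∑ i, eucNorm (g i)) * ε * t := by
              rw [← Finset.sum_mul, ← Finset.sum_mul]
              ring
        intro j
        have hj : ((δ/t) • bb) j = (δ/t) * bb j := rfl
        rw [hj, abs_mul, abs_of_pos (div_pos hδ htpos)]
        calc δ/t * |bb j| ≤ δ/t * ((eucNorm c + ∑ i, eucNorm (g i)) * ε * t) :=
              mul_le_mul_of_nonneg_left (hbb_bound j) (div_pos hδ htpos).le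
        _ = (eucNorm c + ∑ i, eucNorm (g i)) * ε * δ := by
            field_simp
  obtain ⟨bb', hbbeq, hbb'_bound⟩ := hbbx
  have hq : mexp (t • A) *ᵥ (c + ∑ i, β i • g i)
      = ((1 - t/δ) • (c + ∑ i, β i • g i)
          + (t/δ) • ((chat + ∑ i, β i • ghat i) + bb')) + (nc + ∑ i, β i • ng i) := by
    rw [key, hbbeq]
    simp only [smul_add]
    abel
  have hmem1 : (1 - t/δ) • (c + ∑ i, β i • g i) + (t/δ) • ((chat + ∑ i, β i • ghat i) + bb')
      ∈ convexHull ℝ (zonotope c g ∪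
          (zonotope chat ghat
            + {y : Fin n → ℝ | ∀ j, |y j| ≤ (eucNorm c + ∑ i, eucNorm (g i)) * ε * δ})) := by
    have hx0 : (c + ∑ i, β i • g i) ∈ zonotope c g := ⟨β, hβ, rfl⟩
    have hy0 : (chat + ∑ i, β i • ghat i) + bb' ∈ zonotope chat ghat
        + {y : Fin n → ℝ | ∀ j, |y j| ≤ (eucNorm c + ∑ i, eucNorm (g i)) * ε * δ} :=
      Set.add_mem_add ⟨β, hβ, rfl⟩ hbb'_bound
    refine (convex_convexHull ℝ _) (subset_convexHull ℝ _ (Set.mem_union_left _ hx0))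
      (subset_convexHull ℝ _ (Set.mem_union_right _ hy0)) ?_ (div_nonneg ht0 hδ.le) (by ring)
    have h8 : t/δ ≤ 1 := (div_le_one hδ).mpr htδ
    linarith
  have hmem2 : (nc + ∑ i, β i • ng i) ∈
      {x : Fin n → ℝ |
        ∃ (Mc : Matrix (Fin ξ) (Fin ξ) ℝ) (Mg : Fin p → Matrix (Fin ξ) (Fin ξ) ℝ)
          (lam : Fin p → ℝ),
          Mc ∈ Fset Hc δ (phiBound Hc δ η) η ∧
          (∀ i, Mg i ∈ Fset (Hg i) δ (phiBound (Hg i) δ η) η) ∧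
          (∀ i, lam i ∈ Set.Icc (-1 : ℝ) 1) ∧
          x = eucNorm c • (Vc *ᵥ (Mc *ᵥ e1))
            + ∑ i, lam i • (eucNorm (g i) • (Vg i *ᵥ (Mg i *ᵥ e1)))} :=
    ⟨Mc, Mg, β, hMc, hMg, hβ, rfl⟩
  rw [hq]
  exact Set.add_mem_add hmem1 hmem2
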